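/- (Change of measure over a random codebook.) Let P_{UV} = P_U ⊗ P_{V|U} with P_{V|U=u} ≪ P_V, let U₁,…,U_M be i.i.d. P_U, let Ṽ₁,…,Ṽ_M satisfy that the joint law of (U₁,…,U_M,Ṽ₁,…,Ṽ_M) is (P_{UV})^{⊗M} (i.e., Ṽ_m is coupled to U_m via P_{V|U}), and let Ṽ := Ṽ_W where W is uniform on {1,…,M} independent of everything. For a nonnegative measurable function π(u^M; v) satisfying π(u^M; v) ≤ 1{(1/M)Σ_m (dP_{V|U=u_m}/dP_V)(v) ≤ L·exp(−γ)} for all (u^M, v), and V₁ ∼ P_V independent of U^M: E[π(U^M; Ṽ) | U^M] ≤ L·exp(−γ) · E[π(U^M; V₁) | U^M] almost surely. -/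

import Mathlib

open MeasureTheory ProbabilityTheory
open scoped ENNReal

/-- Change of measure over a random codebook (steps (13)–(14)). Given `u^M`, the
auxiliary variable `Ṽ` has law `(1/M) ∑ₘ P_{V|U=uₘ}` and `V₁` has law `P_V`. If the
nonnegative function `π(u^M; ·)` vanishes outside
`{v : (1/M) ∑ₘ (dP_{V|U=uₘ}/dP_V)(v) ≤ L e^{-γ}}`, then
`E[π(u^M; Ṽ)] ≤ L e^{-γ} E[π(u^M; V₁)]`. -/
theorem change_of_measure_random_codebook
    {𝓤 𝓥 : Type*} [MeasurableSpace 𝓤] [MeasurableSpace 𝓥]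
    (μV : Measure 𝓥) [IsProbabilityMeasure μV]
    (κ : Kernel 𝓤 𝓥) [IsMarkovKernel κ]
    (f : 𝓤 → 𝓥 → ℝ≥0∞) (hfm : ∀ u, Measurable (f u))
    (hκ : ∀ u, κ u = μV.withDensity (f u))
    (M : ℕ) (hM : 0 < M) (L γ : ℝ) (hL : 0 < L) (hγ : 0 < γ)
    (π : (Fin M → 𝓤) → 𝓥 → ℝ)
    (hπm : ∀ uM, Measurable (π uM)) (hπ0 : ∀ uM v, 0 ≤ π uM v)
    (hπ : ∀ uM v, π uM v ≤
      if ((M : ℝ≥0∞))⁻¹ * ∑ m, f (uM m) v ≤ ENNReal.ofReal (L * Real.exp (-γ))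
      then 1 else 0)
    (uM : Fin M → 𝓤) :
    ∫ v, π uM v ∂(((M : ℝ≥0∞))⁻¹ • ∑ m, κ (uM m))
      ≤ L * Real.exp (-γ) * ∫ v, π uM v ∂μV := by
  set c : ℝ≥0∞ := ENNReal.ofReal (L * Real.exp (-γ)) with hc
  have hcne : c ≠ ∞ := ENNReal.ofReal_ne_top
  set ν : Measure 𝓥 := ((M : ℝ≥0∞))⁻¹ • ∑ m, κ (uM m) with hν
  have hπ1 : ∀ v, π uM v ≤ 1 := by
    intro v
    refine (hπ uM v).trans ?_
    split <;> norm_num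
  -- lintegral over ν
  have hA : ∫⁻ v, ENNReal.ofReal (π uM v) ∂ν
      = ∫⁻ v, ENNReal.ofReal (π uM v) * (((M : ℝ≥0∞))⁻¹ * ∑ m, f (uM m) v) ∂μV := by
    rw [hν, lintegral_smul_measure, lintegral_finset_sum_measure]
    have : ∀ m : Fin M, ∫⁻ v, ENNReal.ofReal (π uM v) ∂(κ (uM m))
        = ∫⁻ v, ENNReal.ofReal (π uM v) * f (uM m) v ∂μV := by
      intro m
      rw [hκ, lintegral_withDensity_eq_lintegral_mul μV (hfm _)
        ((hπm uM).ennreal_ofReal)]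
      simp [mul_comm]
    simp_rw [this]
    rw [smul_eq_mul, ← lintegral_finset_sum _ (f := fun m v => ENNReal.ofReal (π uM v) * f (uM m) v) (fun m _ =>
      ((hπm uM).ennreal_ofReal.mul (hfm _))), ← lintegral_const_mul _
      (by exact Finset.measurable_sum _ (fun m _ => ((hπm uM).ennreal_ofReal.mul (hfm _))))]
    refine lintegral_congr fun v => ?_
    simp only [Finset.mul_sum]
    exact Finset.sum_congr rfl fun m _ => by ring
  have hpt : ∀ v, ENNReal.ofReal (π uM v) * (((M : ℝ≥0∞))⁻¹ * ∑ m, f (uM m) v)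
      ≤ c * ENNReal.ofReal (π uM v) := by
    intro v
    by_cases h : ((M : ℝ≥0∞))⁻¹ * ∑ m, f (uM m) v ≤ c
    · rw [mul_comm c]
      exact mul_le_mul_right h _
    · have h0 : π uM v = 0 := le_antisymm (by have := hπ uM v; split_ifs at this; exact this) (hπ0 uM v)
      simp [h0]
  have hB1 : ∫⁻ v, ENNReal.ofReal (π uM v) ∂μV ≤ 1 := by
    calc ∫⁻ v, ENNReal.ofReal (π uM v) ∂μV ≤ ∫⁻ _, 1 ∂μV :=
          lintegral_mono fun v => by
            simpa using ENNReal.ofReal_le_ofReal (hπ1 v)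
      _ = 1 := by simp
  have hAle : ∫⁻ v, ENNReal.ofReal (π uM v) ∂ν
      ≤ c * ∫⁻ v, ENNReal.ofReal (π uM v) ∂μV := by
    rw [hA, ← lintegral_const_mul _ (hπm uM).ennreal_ofReal]
    exact lintegral_mono hpt
  have hIν : ∫ v, π uM v ∂ν = (∫⁻ v, ENNReal.ofReal (π uM v) ∂ν).toReal := by
    rw [integral_eq_lintegral_of_nonneg_ae (ae_of_all _ (hπ0 uM))
      (hπm uM).aestronglyMeasurable]
  have hIμ : ∫ v, π uM v ∂μV = (∫⁻ v, ENNReal.ofReal (π uM v) ∂μV).toReal := by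
    rw [integral_eq_lintegral_of_nonneg_ae (ae_of_all _ (hπ0 uM))
      (hπm uM).aestronglyMeasurable]
  rw [hIν, hIμ]
  have hfin : c * ∫⁻ v, ENNReal.ofReal (π uM v) ∂μV ≠ ∞ :=
    ENNReal.mul_ne_top hcne (lt_of_le_of_lt hB1 ENNReal.one_lt_top).ne
  calc (∫⁻ v, ENNReal.ofReal (π uM v) ∂ν).toReal
      ≤ (c * ∫⁻ v, ENNReal.ofReal (π uM v) ∂μV).toReal :=
        ENNReal.toReal_mono hfin hAle
    _ = L * Real.exp (-γ) * (∫⁻ v, ENNReal.ofReal (π uM v) ∂μV).toReal := by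
        rw [ENNReal.toReal_mul, hc, ENNReal.toReal_ofReal
          (by positivity)]
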